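/- The space AC(X,E) equipped with the norm ‖f‖_AC = ‖f‖_∞ + V(f;X) is a Banach space, i.e., it is complete. -/

import Mathlib

open Set

def AbsCont {E : Type*} [NormedAddCommGroup E] {X : Set ℝ} (f : X → E) : Prop :=
  ∀ ε > (0 : ℝ), ∃ δ > (0 : ℝ), ∀ n : ℕ, ∀ a b : Fin n → X,
    (∀ i, (a i : ℝ) < b i) →
    (∀ i j, i ≠ j → Disjoint (Set.Ioo (a i : ℝ) (b i)) (Set.Ioo (a j : ℝ) (b j))) →
    (∑ i, ((b i : ℝ) - a i)) < δ →
    (∑ i, ‖f (b i) - f (a i)‖) < ε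

def PartSums {E : Type*} [NormedAddCommGroup E] {X : Set ℝ} (f : X → E) : Set ℝ :=
  {s | ∃ n : ℕ, ∃ x : Fin (n + 1) → X, StrictMono (fun i => (x i : ℝ)) ∧
    s = ∑ i : Fin n, ‖f (x i.succ) - f (x i.castSucc)‖}

noncomputable def var {E : Type*} [NormedAddCommGroup E] {X : Set ℝ} (f : X → E) : ℝ :=
  sSup (PartSums f)

/-- The supremum norm of `f` on `X`. -/
noncomputable def supNorm {E : Type*} [NormedAddCommGroup E] {X : Set ℝ} (f : X → E) : ℝ :=
  sSup {r | ∃ x : X, r = ‖f x‖}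

/-- The AC norm `‖f‖_AC = ‖f‖_∞ + V(f;X)`. -/
noncomputable def ACnorm {E : Type*} [NormedAddCommGroup E] {X : Set ℝ} (f : X → E) : ℝ :=
  supNorm f + var f

section helpers
variable {E : Type*} [NormedAddCommGroup E] {X : Set ℝ}

lemma chain_le' {u : ℕ → X} {n : ℕ} (h : ∀ i < n, (u i : ℝ) ≤ u (i + 1)) :
    ∀ i j, i ≤ j → j ≤ n → (u i : ℝ) ≤ u j := by
  intro i j hij hjn
  obtain ⟨k, rfl⟩ := Nat.exists_eq_add_of_le hij
  clear hij
  induction k with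
  | zero => simp
  | succ k ih =>
    have h1 : (u i : ℝ) ≤ u (i + k) := ih (by omega)
    have h2 := h (i + k) (by omega)
    calc (u i : ℝ) ≤ u (i + k) := h1
      _ ≤ u (i + k + 1) := h2
      _ = u (i + (k+1)) := by ring_nf

lemma chain_lt' {u : ℕ → X} {n : ℕ} (h : ∀ i < n, (u i : ℝ) < u (i + 1)) :
    ∀ i j, i < j → j ≤ n → (u i : ℝ) < u j := by
  intro i j hij hjn
  obtain ⟨k, rfl⟩ : ∃ k, j = (i + 1) + k := ⟨j - (i+1), by omega⟩
  clear hij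
  induction k with
  | zero => simpa using h i (by omega)
  | succ k ih =>
    have h1 : (u i : ℝ) < u (i + 1 + k) := ih (by omega)
    have h2 := h (i + 1 + k) (by omega)
    calc (u i : ℝ) < u (i + 1 + k) := h1
      _ < u (i + 1 + k + 1) := h2
      _ = u (i + 1 + (k+1)) := by ring_nf

noncomputable def csum (f : X → E) (u : ℕ → X) (m : ℕ) : ℝ :=
  ∑ j ∈ Finset.range m, ‖f (u (j + 1)) - f (u j)‖

lemma zero_mem_partSums (f : X → E) (hXne : X.Nonempty) : (0:ℝ) ∈ PartSums f := by
  obtain ⟨x₀, hx₀⟩ := hXne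
  refine ⟨0, fun _ => ⟨x₀, hx₀⟩, ?_, by simp⟩
  intro i j hij
  exact absurd (Fin.ext (by omega : i.val = j.val)) (ne_of_lt hij)

lemma partSums_nonneg (f : X → E) : ∀ s ∈ PartSums f, 0 ≤ s := by
  rintro s ⟨n, x, -, rfl⟩; positivity

lemma csum_mem_partSums (f : X → E) (u : ℕ → X) (m : ℕ)
    (h : ∀ i < m, (u i : ℝ) < u (i + 1)) : csum f u m ∈ PartSums f := by
  refine ⟨m, fun i => u i, ?_, ?_⟩
  · intro i j hij
    exact chain_lt' h i j (by exact_mod_cast hij) (by omega)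
  · rw [csum, ← Fin.sum_univ_eq_sum_range (fun j => ‖f (u (j + 1)) - f (u j)‖) m]
    refine Finset.sum_congr rfl fun i _ => ?_
    simp [Fin.val_succ, Fin.coe_castSucc]

lemma Ioo_disj {a₁ b₁ a₂ b₂ : ℝ} (h : b₁ ≤ a₂) : Disjoint (Set.Ioo a₁ b₁) (Set.Ioo a₂ b₂) :=
  Set.disjoint_left.2 fun x hx hx' => absurd (hx.2.trans_le h) (not_lt.2 hx'.1.le)

end helpers
section helpers2
variable {E : Type*} [NormedAddCommGroup E] {X : Set ℝ}

lemma weak_csum_le_var (f : X → E) (hXne : X.Nonempty) (hb : BddAbove (PartSums f)) :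
    ∀ m : ℕ, ∀ u : ℕ → X, (∀ i < m, (u i : ℝ) ≤ u (i + 1)) → csum f u m ≤ var f := by
  intro m
  induction m using Nat.strong_induction_on with
  | _ m IH =>
    intro u hu
    by_cases hstrict : ∀ i < m, (u i : ℝ) < u (i + 1)
    · exact le_csSup hb (csum_mem_partSums f u m hstrict)
    · push_neg at hstrict
      obtain ⟨i, him, hle⟩ := hstrict
      have heq : (u (i+1) : ℝ) = u i := le_antisymm hle (hu i him)
      have heqX : u (i+1) = u i := Subtype.ext heq
      set u' : ℕ → X := fun j => if j ≤ i then u j else u (j + 1) with hu'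
      have hsteps : ∀ j < m - 1, (u' j : ℝ) ≤ u' (j + 1) := by
        intro j hj
        rcases lt_trichotomy j i with hji | hrfl | hij2
        · simp only [hu', if_pos (le_of_lt hji), if_pos (by omega : j + 1 ≤ i)]
          exact hu j (by omega)
        · subst hrfl
          simp only [hu', if_pos (le_refl j), if_neg (by omega : ¬ j + 1 ≤ j)]
          calc (u j : ℝ) = u (j+1) := heq.symm
            _ ≤ u (j+1+1) := hu (j+1) (by omega)
        · simp only [hu', if_neg (by omega : ¬ j ≤ i), if_neg (by omega : ¬ j + 1 ≤ i)]
          exact hu (j+1) (by omega)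
      have hti : ‖f (u (i+1)) - f (u i)‖ = 0 := by rw [heqX]; simp
      have h1 : csum f u m
          = (∑ j ∈ Finset.Ico 0 i, ‖f (u (j+1)) - f (u j)‖)
            + (‖f (u (i+1)) - f (u i)‖ + ∑ j ∈ Finset.Ico (i+1) m, ‖f (u (j+1)) - f (u j)‖) := by
        rw [csum, Finset.range_eq_Ico,
          ← Finset.sum_Ico_consecutive _ (Nat.zero_le i) (by omega : i ≤ m),
          Finset.sum_eq_sum_Ico_succ_bot (by omega : i < m)]
      have h2 : csum f u' (m-1)
          = (∑ j ∈ Finset.Ico 0 i, ‖f (u' (j+1)) - f (u' j)‖)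
            + ∑ j ∈ Finset.Ico i (m-1), ‖f (u' (j+1)) - f (u' j)‖ := by
        rw [csum, Finset.range_eq_Ico,
          ← Finset.sum_Ico_consecutive _ (Nat.zero_le i) (by omega : i ≤ m - 1)]
      have h3 : ∑ j ∈ Finset.Ico 0 i, ‖f (u' (j+1)) - f (u' j)‖
          = ∑ j ∈ Finset.Ico 0 i, ‖f (u (j+1)) - f (u j)‖ := by
        refine Finset.sum_congr rfl fun j hj => ?_
        have hji : j < i := (Finset.mem_Ico.1 hj).2
        simp only [hu', if_pos (by omega : j + 1 ≤ i), if_pos (by omega : j ≤ i)]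
      have h4 : ∀ j, i ≤ j → ‖f (u' (j+1)) - f (u' j)‖ = ‖f (u (j+2)) - f (u (j+1))‖ := by
        intro j hj
        rcases eq_or_lt_of_le hj with rfl | hj'
        · simp only [hu', if_pos (le_refl i), if_neg (by omega : ¬ i + 1 ≤ i)]
          rw [heqX, show i + 1 + 1 = i + 2 from rfl]
        · simp only [hu', if_neg (by omega : ¬ j ≤ i), if_neg (by omega : ¬ j + 1 ≤ i)]
      have h5 : ∑ j ∈ Finset.Ico i (m-1), ‖f (u' (j+1)) - f (u' j)‖
          = ∑ j ∈ Finset.Ico (i+1) m, ‖f (u (j+1)) - f (u j)‖ := by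
        rw [Finset.sum_Ico_eq_sum_range, Finset.sum_Ico_eq_sum_range,
          show m - 1 - i = m - (i+1) from by omega]
        refine Finset.sum_congr rfl fun c _ => ?_
        rw [h4 (i + c) (by omega), show i + c + 2 = i + 1 + c + 1 from by omega,
          show i + c + 1 = i + 1 + c from by omega]
      have hsum : csum f u' (m - 1) = csum f u m := by
        rw [h1, h2, h3, h5, hti, zero_add]
      calc csum f u m = csum f u' (m-1) := hsum.symm
        _ ≤ var f := IH (m-1) (by omega) u' hsteps

end helpers2
section helpers3
variable {E : Type*} [NormedAddCommGroup E] {X : Set ℝ}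

lemma csum_bound (f : X → E) {δ M : ℝ} (hδ : 0 < δ) (hM : 0 ≤ M)
    (hfM : ∀ x, ‖f x‖ ≤ M)
    (hAC : ∀ n : ℕ, ∀ a b : Fin n → X, (∀ i, (a i : ℝ) < b i) →
      (∀ i j, i ≠ j → Disjoint (Set.Ioo (a i : ℝ) (b i)) (Set.Ioo (a j : ℝ) (b j))) →
      (∑ i, ((b i : ℝ) - a i)) < δ → (∑ i, ‖f (b i) - f (a i)‖) < 1) :
    ∀ m : ℕ, ∀ u : ℕ → X, (∀ i < m, (u i : ℝ) < u (i + 1)) →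
      csum f u m ≤ (1 + 2*M) * (1 + ((u m : ℝ) - u 0) / δ) := by
  intro m
  induction m using Nat.strong_induction_on with
  | _ m IH =>
    intro u hu
    classical
    have hule : ∀ i < m, (u i : ℝ) ≤ u (i+1) := fun i hi => (hu i hi).le
    set P : ℕ → Prop := fun j => (u j : ℝ) - u 0 < δ with hP
    set k := Nat.findGreatest P m with hk
    have hkm : k ≤ m := Nat.findGreatest_le m
    have hPk : P k := Nat.findGreatest_spec (Nat.zero_le m) (by simp [hP, hδ])
    have hfac : (0:ℝ) ≤ ((u m : ℝ) - u 0) / δ :=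
      div_nonneg (sub_nonneg.2 (chain_le' hule 0 m (Nat.zero_le m) le_rfl)) hδ.le
    -- block sum
    have hblock : (∑ j ∈ Finset.range k, ‖f (u (j+1)) - f (u j)‖) < 1 := by
      have hb := hAC k (fun i => u i) (fun i => u (i+1))
        (fun i => hu i (lt_of_lt_of_le i.2 hkm))
        (by
          intro i j hij
          rcases Ne.lt_or_gt hij with h | h
          · exact Ioo_disj (chain_le' hule (i+1) j (by exact_mod_cast h) (by omega))
          · exact (Ioo_disj (chain_le' hule (j+1) i (by exact_mod_cast h) (by omega))).symm)
        (by
          rw [Fin.sum_univ_eq_sum_range (fun j => ((u (j+1) : ℝ) - u j)) k,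
            Finset.sum_range_sub (fun j => (u j : ℝ)) k]
          simpa [hP] using hPk)
      rw [Fin.sum_univ_eq_sum_range (fun j => ‖f (u (j+1)) - f (u j)‖) k] at hb
      exact hb
    rcases eq_or_lt_of_le hkm with heq | hklt
    · -- k = m
      rw [heq] at hblock
      rw [csum]
      exact le_of_lt (lt_of_lt_of_le hblock (by nlinarith))
    · -- k < m
      have hnP : ¬ P (k+1) := Nat.findGreatest_is_greatest (n := m) (by omega) (by omega)
      have hδ' : δ ≤ (u (k+1) : ℝ) - u 0 := by simpa [hP, not_lt] using hnP
      set u' : ℕ → X := fun j => u (j + (k+1)) with hu'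
      set m' := m - (k+1) with hm'
      have hsteps : ∀ i < m', (u' i : ℝ) < u' (i+1) := by
        intro i hi
        simp only [hu']
        have := hu (i + (k+1)) (by omega)
        calc (u (i + (k+1)) : ℝ) < u (i + (k+1) + 1) := this
          _ = u (i + 1 + (k+1)) := by rw [show i + (k+1) + 1 = i + 1 + (k+1) from by omega]
      have htail := IH m' (by omega) u' hsteps
      have hu'm : u' m' = u m := by rw [hu']; simp only; rw [Nat.sub_add_cancel (by omega)]
      have hu'0 : u' 0 = u (k+1) := by simp [hu']
      rw [hu'm, hu'0] at htail
      have htk : ‖f (u (k+1)) - f (u k)‖ ≤ 2*M := by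
        have := norm_sub_le (f (u (k+1))) (f (u k))
        have h1 := hfM (u (k+1)); have h2 := hfM (u k)
        linarith
      have e1 : ∑ j ∈ Finset.Ico (k+1) m, ‖f (u (j+1)) - f (u j)‖ = csum f u' m' := by
        rw [csum, Finset.sum_Ico_eq_sum_range, show m - (k+1) = m' from rfl]
        refine Finset.sum_congr rfl fun c _ => ?_
        simp only [hu']
        rw [show k + 1 + c + 1 = c + 1 + (k+1) from by omega,
          show k + 1 + c = c + (k+1) from by omega]
      have e2 : csum f u m = (∑ j ∈ Finset.range k, ‖f (u (j+1)) - f (u j)‖)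
          + ∑ j ∈ Finset.Ico k m, ‖f (u (j+1)) - f (u j)‖ := by
        rw [csum, Finset.range_eq_Ico,
          ← Finset.sum_Ico_consecutive (fun j => ‖f (u (j+1)) - f (u j)‖)
            (Nat.zero_le k) (by omega : k ≤ m), ← Finset.range_eq_Ico]
      have e3 : ∑ j ∈ Finset.Ico k m, ‖f (u (j+1)) - f (u j)‖
          = ‖f (u (k+1)) - f (u k)‖ + ∑ j ∈ Finset.Ico (k+1) m, ‖f (u (j+1)) - f (u j)‖ :=
        Finset.sum_eq_sum_Ico_succ_bot (by omega : k < m) _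
      have hsplit : csum f u m = (∑ j ∈ Finset.range k, ‖f (u (j+1)) - f (u j)‖)
          + ‖f (u (k+1)) - f (u k)‖ + csum f u' m' := by
        rw [e2, e3, e1, add_assoc]
      have hBge : 1 ≤ ((u (k+1) : ℝ) - u 0) / δ := (one_le_div hδ).2 hδ'
      have hA : (0:ℝ) ≤ ((u m : ℝ) - u (k+1)) / δ :=
        div_nonneg (sub_nonneg.2 (chain_le' hule (k+1) m (by omega) le_rfl)) hδ.le
      have hABsum : ((u m : ℝ) - u 0) / δ
          = ((u m : ℝ) - u (k+1)) / δ + ((u (k+1) : ℝ) - u 0) / δ := by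
        rw [← add_div, sub_add_sub_cancel]
      rw [hsplit]
      nlinarith [mul_le_mul_of_nonneg_left hBge (by linarith : (0:ℝ) ≤ 1 + 2*M)]

end helpers3
section helpers4
variable {E : Type*} [NormedAddCommGroup E] {X : Set ℝ}

lemma AbsCont.exists_bound {f : X → E} (hX : IsCompact X) (hXne : X.Nonempty)
    (hf : AbsCont f) : ∃ M, 0 ≤ M ∧ ∀ x, ‖f x‖ ≤ M := by
  haveI : Nonempty X := ⟨⟨hXne.choose, hXne.choose_spec⟩⟩
  haveI : CompactSpace X := isCompact_iff_compactSpace.mp hX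
  have hcont : Continuous f := by
    apply UniformContinuous.continuous
    rw [Metric.uniformContinuous_iff]
    intro ε hε
    obtain ⟨δ, hδ, H⟩ := hf ε hε
    refine ⟨δ, hδ, ?_⟩
    intro x y hxy
    have hdist : |(x : ℝ) - y| < δ := by
      rw [Subtype.dist_eq, Real.dist_eq] at hxy; exact hxy
    rcases lt_trichotomy (x : ℝ) (y : ℝ) with h | h | h
    · have h2 := H 1 (fun _ => x) (fun _ => y) (fun _ => h)
        (fun i j hij => absurd (Fin.ext (by omega : i.val = j.val)) hij)
        (by
          have := (abs_lt.1 hdist).1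
          simpa using by linarith : (∑ _i : Fin 1, ((y:ℝ) - x)) < δ)
      rw [dist_eq_norm, norm_sub_rev]
      simpa using h2
    · have : x = y := Subtype.ext h
      subst this
      simpa using hε
    · have h2 := H 1 (fun _ => y) (fun _ => x) (fun _ => h)
        (fun i j hij => absurd (Fin.ext (by omega : i.val = j.val)) hij)
        (by
          have := (abs_lt.1 hdist).2
          simpa using by linarith : (∑ _i : Fin 1, ((x:ℝ) - y)) < δ)
      rw [dist_eq_norm]
      simpa using h2
  obtain ⟨x₀, -, hx₀⟩ := (isCompact_univ : IsCompact (Set.univ : Set X)).exists_isMaxOn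
      Set.univ_nonempty ((continuous_norm.comp hcont).continuousOn)
  rw [isMaxOn_iff] at hx₀
  exact ⟨‖f x₀‖, norm_nonneg _, fun x => hx₀ x (Set.mem_univ x)⟩

end helpers4
section helpers5
variable {E : Type*} [NormedAddCommGroup E] {X : Set ℝ}

lemma AbsCont.bddAbove_partSums {f : X → E} (hX : IsCompact X) (hXne : X.Nonempty)
    (hf : AbsCont f) : BddAbove (PartSums f) := by
  obtain ⟨M, hM0, hM⟩ := AbsCont.exists_bound hX hXne hf
  obtain ⟨δ, hδ, hAC⟩ := hf 1 one_pos
  obtain ⟨B, hB⟩ := hX.isBounded.exists_norm_le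
  refine ⟨(1 + 2*M) * (1 + (B + B) / δ), ?_⟩
  rintro s ⟨n, x, hmono, rfl⟩
  set u : ℕ → X := fun j => x ⟨min j n, by omega⟩ with hu
  have h1 : ∀ i < n, (u i : ℝ) < u (i+1) := by
    intro i hi
    refine hmono ?_
    simp only [Fin.mk_lt_mk]
    omega
  have h2 : ∑ i : Fin n, ‖f (x i.succ) - f (x i.castSucc)‖ = csum f u n := by
    rw [csum, ← Fin.sum_univ_eq_sum_range (fun j => ‖f (u (j+1)) - f (u j)‖) n]
    refine Finset.sum_congr rfl fun i _ => ?_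
    have hi := i.isLt
    have e1 : u (i.val + 1) = x i.succ := by
      simp only [hu]
      congr 1
      apply Fin.ext
      simp only [Fin.val_succ]
      omega
    have e2 : u i.val = x i.castSucc := by
      simp only [hu]
      congr 1
      apply Fin.ext
      simp only [Fin.coe_castSucc]
      omega
    rw [e1, e2]
  rw [h2]
  have h3 := csum_bound f hδ hM0 hM hAC n u h1
  have h4 : ((u n : ℝ) - u 0) ≤ B + B := by
    have b1 := hB (u n : ℝ) (u n).2
    have b2 := hB (u 0 : ℝ) (u 0).2
    rw [Real.norm_eq_abs] at b1 b2
    have := abs_le.1 b1; have := abs_le.1 b2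
    cases abs_le.1 b1; cases abs_le.1 b2
    linarith [(abs_le.1 b1).1, (abs_le.1 b1).2, (abs_le.1 b2).1, (abs_le.1 b2).2]
  have h5 : ((u n : ℝ) - u 0) / δ ≤ (B + B) / δ := by
    exact div_le_div_of_nonneg_right h4 hδ.le
  nlinarith

lemma AbsCont.sub {f g : X → E} (hf : AbsCont f) (hg : AbsCont g) :
    AbsCont (fun x => f x - g x) := by
  intro ε hε
  obtain ⟨δ₁, hδ₁, H₁⟩ := hf (ε/2) (by linarith)
  obtain ⟨δ₂, hδ₂, H₂⟩ := hg (ε/2) (by linarith)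
  refine ⟨min δ₁ δ₂, lt_min hδ₁ hδ₂, ?_⟩
  intro n a b hab hdisj hlen
  have h1 := H₁ n a b hab hdisj (hlen.trans_le (min_le_left _ _))
  have h2 := H₂ n a b hab hdisj (hlen.trans_le (min_le_right _ _))
  calc (∑ i, ‖(f (b i) - g (b i)) - (f (a i) - g (a i))‖)
      ≤ ∑ i, (‖f (b i) - f (a i)‖ + ‖g (b i) - g (a i)‖) := by
        refine Finset.sum_le_sum fun i _ => ?_
        have he : (f (b i) - g (b i)) - (f (a i) - g (a i))
            = (f (b i) - f (a i)) - (g (b i) - g (a i)) := by abel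
        rw [he]
        exact norm_sub_le _ _
    _ = (∑ i, ‖f (b i) - f (a i)‖) + ∑ i, ‖g (b i) - g (a i)‖ := Finset.sum_add_distrib
    _ < ε := by linarith

end helpers5
section helpers6
variable {E : Type*} [NormedAddCommGroup E] {X : Set ℝ}

lemma famSum_le_var {f : X → E} (hXne : X.Nonempty) (hb : BddAbove (PartSums f))
    {n : ℕ} (a b : Fin n → X) (hab : ∀ i, (a i : ℝ) < b i)
    (hdisj : ∀ i j, i ≠ j → Disjoint (Set.Ioo (a i : ℝ) (b i)) (Set.Ioo (a j : ℝ) (b j))) :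
    (∑ i, ‖f (b i) - f (a i)‖) ≤ var f := by
  rcases Nat.eq_zero_or_pos n with rfl | hn
  · simpa [var] using le_csSup hb (zero_mem_partSums f hXne)
  have key : ∀ i j, (a i : ℝ) < a j → (b i : ℝ) ≤ a j := by
    intro i j hij
    by_contra hlt
    push_neg at hlt
    have hne : i ≠ j := fun h => by subst h; exact lt_irrefl _ hij
    have hd := Set.disjoint_left.1 (hdisj i j hne)
    have h1 : (a j : ℝ) < min (b i : ℝ) (b j) := lt_min hlt (hab j)
    set t := ((a j : ℝ) + min (b i : ℝ) (b j)) / 2 with ht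
    have ht1 : t ∈ Set.Ioo (a i : ℝ) (b i) := by
      constructor
      · have : (a j : ℝ) < t := by rw [ht]; linarith
        linarith
      · have : t < min (b i : ℝ) (b j) := by rw [ht]; linarith
        exact this.trans_le (min_le_left _ _)
    have ht2 : t ∈ Set.Ioo (a j : ℝ) (b j) := by
      constructor
      · rw [ht]; linarith
      · have : t < min (b i : ℝ) (b j) := by rw [ht]; linarith
        exact this.trans_le (min_le_right _ _)
    exact hd ht1 ht2
  have hane : ∀ i j : Fin n, i ≠ j → (a i : ℝ) ≠ (a j : ℝ) := by
    intro i j hne heq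
    have hd := Set.disjoint_left.1 (hdisj i j hne)
    have h1 : (a i : ℝ) < min (b i : ℝ) (b j) := lt_min (hab i) (heq ▸ hab j)
    set t := ((a i : ℝ) + min (b i : ℝ) (b j)) / 2 with ht
    have ht1 : t ∈ Set.Ioo (a i : ℝ) (b i) := by
      constructor
      · rw [ht]; linarith
      · have : t < min (b i : ℝ) (b j) := by rw [ht]; linarith
        exact this.trans_le (min_le_left _ _)
    have ht2 : t ∈ Set.Ioo (a j : ℝ) (b j) := by
      constructor
      · rw [ht, ← heq]; linarith
      · have : t < min (b i : ℝ) (b j) := by rw [ht]; linarith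
        exact this.trans_le (min_le_right _ _)
    exact hd ht1 ht2
  set σ := Tuple.sort (fun i => (a i : ℝ)) with hσ
  have hmono : Monotone ((fun i => (a i : ℝ)) ∘ σ) := Tuple.monotone_sort _
  have hstrict : ∀ i j : Fin n, i < j → (a (σ i) : ℝ) < a (σ j) := by
    intro i j hij
    rcases lt_or_eq_of_le (hmono hij.le) with h | h
    · exact h
    · exact absurd h (hane _ _ fun e => (ne_of_lt hij) (σ.injective e))
  have hsorted : ∀ i j : Fin n, i < j → (b (σ i) : ℝ) ≤ a (σ j) :=
    fun i j hij => key _ _ (hstrict i j hij)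
  set a' : ℕ → X := fun j => a (σ ⟨min j (n-1), by omega⟩) with ha'
  set b' : ℕ → X := fun j => b (σ ⟨min j (n-1), by omega⟩) with hb'
  set u : ℕ → X := fun j => if j % 2 = 0 then a' (j / 2) else b' (j / 2) with hu
  have hchain : ∀ j < 2*n - 1, (u j : ℝ) ≤ u (j + 1) := by
    intro j hj
    obtain ⟨c, rfl | rfl⟩ := Nat.even_or_odd' j
    · have hc : c < n := by omega
      have e1 : u (2*c) = a' c := by
        simp only [hu]
        rw [if_pos (by omega), show 2*c/2 = c from by omega]
      have e2 : u (2*c + 1) = b' c := by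
        simp only [hu]
        rw [if_neg (by omega), show (2*c+1)/2 = c from by omega]
      rw [e1, e2, ha', hb']
      exact (hab _).le
    · have hc : c + 1 < n := by omega
      have e1 : u (2*c + 1) = b' c := by
        simp only [hu]
        rw [if_neg (by omega), show (2*c+1)/2 = c from by omega]
      have e2 : u (2*c + 1 + 1) = a' (c+1) := by
        simp only [hu]
        rw [if_pos (by omega), show (2*c+1+1)/2 = c + 1 from by omega]
      rw [e1, e2, ha', hb']
      have hlt : (⟨min c (n-1), by omega⟩ : Fin n) < ⟨min (c+1) (n-1), by omega⟩ := by
        simp only [Fin.mk_lt_mk]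
        omega
      exact hsorted _ _ hlt
  have hcv := weak_csum_le_var f hXne hb (2*n - 1) u hchain
  refine le_trans ?_ hcv
  have hperm : (∑ i, ‖f (b i) - f (a i)‖) = ∑ i : Fin n, ‖f (b (σ i)) - f (a (σ i))‖ :=
    (Equiv.sum_comp σ (fun i => ‖f (b i) - f (a i)‖)).symm
  have hram : (∑ i : Fin n, ‖f (b (σ i)) - f (a (σ i))‖)
      = ∑ j ∈ Finset.range n, ‖f (b' j) - f (a' j)‖ := by
    rw [← Fin.sum_univ_eq_sum_range (fun j => ‖f (b' j) - f (a' j)‖) n]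
    refine Finset.sum_congr rfl fun i _ => ?_
    have hi := i.isLt
    have hfin : (⟨min (i.val) (n-1), by omega⟩ : Fin n) = i :=
      Fin.ext (show min (i.val) (n-1) = i.val by omega)
    have e1 : a' i.val = a (σ i) := by simp only [ha', hfin]
    have e2 : b' i.val = b (σ i) := by simp only [hb', hfin]
    rw [e1, e2]
  rw [hperm, hram]
  have himg : (∑ j ∈ Finset.range n, ‖f (b' j) - f (a' j)‖)
      = ∑ j ∈ (Finset.range n).image (fun i => 2*i), ‖f (u (j+1)) - f (u j)‖ := by
    rw [Finset.sum_image (by intro p _ q _ h; simp only at h; omega)]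
    refine Finset.sum_congr rfl fun j hj => ?_
    have e1 : u (2*j) = a' j := by
      simp only [hu]
      rw [if_pos (by omega), show 2*j/2 = j from by omega]
    have e2 : u (2*j+1) = b' j := by
      simp only [hu]
      rw [if_neg (by omega), show (2*j+1)/2 = j from by omega]
    rw [e1, e2]
  rw [himg, csum]
  refine Finset.sum_le_sum_of_subset_of_nonneg ?_ (fun _ _ _ => norm_nonneg _)
  intro j hj
  simp only [Finset.mem_image, Finset.mem_range] at hj ⊢
  obtain ⟨p, hp, rfl⟩ := hj
  omega

end helpers6

open Filter

/-- `AC(X,E)` with the norm `‖·‖_AC` is complete: every Cauchy sequence of absolutely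
continuous functions converges in the AC norm to an absolutely continuous function. -/
theorem AC_complete {E : Type*} [NormedAddCommGroup E] [NormedSpace ℝ E] [CompleteSpace E]
    {X : Set ℝ} (hX : IsCompact X) (hXne : X.Nonempty)
    (f : ℕ → X → E) (hf : ∀ n, AbsCont (f n))
    (hCauchy : ∀ ε > (0 : ℝ), ∃ N : ℕ, ∀ m ≥ N, ∀ n ≥ N,
      ACnorm (fun x => f m x - f n x) < ε) :
    ∃ g : X → E, AbsCont g ∧
      ∀ ε > (0 : ℝ), ∃ N : ℕ, ∀ n ≥ N, ACnorm (fun x => f n x - g x) < ε := by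
  have hACd : ∀ m n, AbsCont (fun x => f m x - f n x) := fun m n => (hf m).sub (hf n)
  have hbdd : ∀ m n, BddAbove {r | ∃ x : X, r = ‖f m x - f n x‖} := by
    intro m n
    obtain ⟨M, hM0, hM⟩ := AbsCont.exists_bound hX hXne (hACd m n)
    exact ⟨M, by rintro r ⟨x, rfl⟩; exact hM x⟩
  have hbddP : ∀ m n, BddAbove (PartSums (fun x => f m x - f n x)) :=
    fun m n => AbsCont.bddAbove_partSums hX hXne (hACd m n)
  have hnorm_le : ∀ m n (x : X), ‖f m x - f n x‖ ≤ ACnorm (fun x => f m x - f n x) := by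
    intro m n x
    have h1 : ‖f m x - f n x‖ ≤ supNorm (fun x => f m x - f n x) :=
      le_csSup (hbdd m n) ⟨x, rfl⟩
    have h2 : 0 ≤ var (fun x => f m x - f n x) :=
      Real.sSup_nonneg (partSums_nonneg _)
    rw [ACnorm]; linarith
  have hvar_le : ∀ m n s, s ∈ PartSums (fun x => f m x - f n x) →
      s ≤ ACnorm (fun x => f m x - f n x) := by
    intro m n s hs
    have h1 : s ≤ var (fun x => f m x - f n x) := le_csSup (hbddP m n) hs
    have h2 : 0 ≤ supNorm (fun x => f m x - f n x) :=
      Real.sSup_nonneg (by rintro r ⟨x, rfl⟩; positivity)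
    rw [ACnorm]; linarith
  have hvarACle : ∀ m n, var (fun x => f m x - f n x) ≤ ACnorm (fun x => f m x - f n x) := by
    intro m n
    have h2 : 0 ≤ supNorm (fun x => f m x - f n x) :=
      Real.sSup_nonneg (by rintro r ⟨x, rfl⟩; positivity)
    rw [ACnorm]; linarith
  have hlim : ∀ x : X, ∃ l, Tendsto (fun n => f n x) atTop (nhds l) := by
    intro x
    apply cauchySeq_tendsto_of_complete
    rw [Metric.cauchySeq_iff]
    intro ε hε
    obtain ⟨N, hN⟩ := hCauchy ε hε
    refine ⟨N, fun m hm n hn => ?_⟩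
    rw [dist_eq_norm]
    exact lt_of_le_of_lt (hnorm_le m n x) (hN m hm n hn)
  choose g hg using hlim
  refine ⟨g, ?_, ?_⟩
  · -- AbsCont g
    intro ε hε
    obtain ⟨N, hN⟩ := hCauchy (ε/4) (by linarith)
    obtain ⟨δ, hδ, HN⟩ := hf N (ε/4) (by linarith)
    refine ⟨δ, hδ, ?_⟩
    intro n a b hab hdisj hlen
    have h1 := HN n a b hab hdisj hlen
    have h2 : (∑ i, ‖(g (b i) - f N (b i)) - (g (a i) - f N (a i))‖) ≤ ε/4 := by
      have htend : Tendsto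
          (fun m => ∑ i, ‖(f m (b i) - f N (b i)) - (f m (a i) - f N (a i))‖)
          atTop (nhds (∑ i, ‖(g (b i) - f N (b i)) - (g (a i) - f N (a i))‖)) := by
        refine tendsto_finset_sum _ fun i _ => ?_
        exact (((hg (b i)).sub_const _).sub ((hg (a i)).sub_const _)).norm
      refine le_of_tendsto htend ?_
      filter_upwards [eventually_ge_atTop N] with m hm
      have hfam := famSum_le_var hXne (hbddP m N) a b hab hdisj
      refine le_trans hfam ?_
      exact le_trans (hvarACle m N) (hN m hm N le_rfl).le
    calc (∑ i, ‖g (b i) - g (a i)‖)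
        ≤ ∑ i, (‖f N (b i) - f N (a i)‖
            + ‖(g (b i) - f N (b i)) - (g (a i) - f N (a i))‖) := by
          refine Finset.sum_le_sum fun i _ => ?_
          have he : g (b i) - g (a i) = (f N (b i) - f N (a i))
              + ((g (b i) - f N (b i)) - (g (a i) - f N (a i))) := by abel
          rw [he]
          exact norm_add_le _ _
      _ = (∑ i, ‖f N (b i) - f N (a i)‖)
          + ∑ i, ‖(g (b i) - f N (b i)) - (g (a i) - f N (a i))‖ := Finset.sum_add_distrib
      _ < ε := by linarith
  · -- convergence
    intro ε hε
    obtain ⟨N, hN⟩ := hCauchy (ε/3) (by linarith)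
    refine ⟨N, fun n hn => ?_⟩
    have hsup : supNorm (fun x => f n x - g x) ≤ ε/3 := by
      refine Real.sSup_le ?_ (by linarith)
      rintro r ⟨x, rfl⟩
      have htend : Tendsto (fun m => ‖f n x - f m x‖) atTop (nhds ‖f n x - g x‖) :=
        ((hg x).const_sub _).norm
      refine le_of_tendsto htend ?_
      filter_upwards [eventually_ge_atTop N] with m hm
      exact le_trans (hnorm_le n m x) (hN n hn m hm).le
    have hvar : var (fun x => f n x - g x) ≤ ε/3 := by
      refine Real.sSup_le ?_ (by linarith)
      rintro s ⟨k, x, hmono, rfl⟩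
      have htend : Tendsto
          (fun m => ∑ i : Fin k, ‖(f n (x i.succ) - f m (x i.succ))
            - (f n (x i.castSucc) - f m (x i.castSucc))‖)
          atTop (nhds (∑ i : Fin k, ‖(f n (x i.succ) - g (x i.succ))
            - (f n (x i.castSucc) - g (x i.castSucc))‖)) := by
        refine tendsto_finset_sum _ fun i _ => ?_
        exact (((hg _).const_sub _).sub ((hg _).const_sub _)).norm
      refine le_of_tendsto htend ?_
      filter_upwards [eventually_ge_atTop N] with m hm
      have hmem : (∑ i : Fin k, ‖(f n (x i.succ) - f m (x i.succ))
          - (f n (x i.castSucc) - f m (x i.castSucc))‖)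
          ∈ PartSums (fun y => f n y - f m y) := ⟨k, x, hmono, rfl⟩
      exact le_trans (hvar_le n m _ hmem) (hN n hn m hm).le
    have hle : ACnorm (fun x => f n x - g x) ≤ 2*ε/3 := by
      rw [ACnorm]; linarith
    linarith
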